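/- For every n ≥ 1, ℓ ≥ 1, and ε ∈ (0,1), there exists an ε-biased ℓ-wise independent distribution S on {−1,1}ⁿ whose support has size 2^{O(log log n + ℓ + log(1/ε))}; in particular, it can be sampled with O(log log n + ℓ + log(1/ε)) random bits. -/

import Mathlib

open Finset

noncomputable def chi {m : ℕ} (v w : Fin m → ZMod 2) : ℝ := ∏ c, (-1 : ℝ)^((v c * w c).val)

lemma zmod_negone_add (x y : ZMod 2) : ((-1:ℝ))^((x+y).val) = (-1)^x.val * (-1)^y.val := by
  rw [ZMod.val_add, ← pow_add, ← neg_one_pow_eq_pow_mod_two]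

lemma chi_one_or_neg {m : ℕ} (v w : Fin m → ZMod 2) : chi v w = 1 ∨ chi v w = -1 := by
  unfold chi
  refine Finset.prod_induction _ (fun r => r = 1 ∨ r = -1) ?_ (Or.inl rfl) ?_
  · rintro a b (ha | ha) (hb | hb) <;> simp [ha, hb]
  · intro c _
    rcases Nat.even_or_odd ((v c * w c).val) with h | h
    · left; exact h.neg_one_pow
    · right; exact h.neg_one_pow

lemma chi_zero {m : ℕ} (w : Fin m → ZMod 2) : chi 0 w = 1 := by
  simp [chi]

lemma chi_add {m : ℕ} (v v' w : Fin m → ZMod 2) : chi (v + v') w = chi v w * chi v' w := by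
  unfold chi
  rw [← Finset.prod_mul_distrib]
  refine Finset.prod_congr rfl fun c _ => ?_
  rw [Pi.add_apply, add_mul, zmod_negone_add]

lemma sum_chi_ne {m : ℕ} {v : Fin m → ZMod 2} (hv : v ≠ 0) :
    ∑ w : Fin m → ZMod 2, chi v w = 0 := by
  unfold chi
  rw [← Fintype.piFinset_univ,
    ← Finset.prod_univ_sum (t := fun _ : Fin m => Finset.univ)
      (f := fun c x => (-1:ℝ)^((v c * x).val))]
  obtain ⟨c, hc⟩ : ∃ c, v c ≠ 0 := by
    by_contra h; push_neg at h; exact hv (funext h)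
  refine Finset.prod_eq_zero (Finset.mem_univ c) ?_
  have h2 : ∀ a : ZMod 2, a = 0 ∨ a = 1 := by decide
  have : v c = 1 := (h2 (v c)).resolve_left hc
  rw [this]
  have huniv : (Finset.univ : Finset (ZMod 2)) = {0, 1} := by decide
  rw [huniv, Finset.sum_pair (by decide : (0:ZMod 2) ≠ 1)]
  norm_num [show (ZMod.val ((1:ZMod 2)*0)) = 0 from rfl, show (ZMod.val (1 : ZMod 2)) = 1 from rfl]

lemma sum_chi_zero {m : ℕ} : ∑ w : Fin m → ZMod 2, chi (0 : Fin m → ZMod 2) w = 2 ^ m := by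
  simp [chi_zero]

lemma sum_chi {m : ℕ} (v : Fin m → ZMod 2) :
    ∑ w : Fin m → ZMod 2, chi v w = if v = 0 then (2:ℝ) ^ m else 0 := by
  split_ifs with h
  · subst h; exact sum_chi_zero
  · exact sum_chi_ne h
open Finset

lemma vandermonde_power_sums {K : Type*} [Field K] {ι : Type*} [DecidableEq ι] {y : Finset ι}
    (hy : y.Nonempty) (f : ι → K) (hf : Set.InjOn f y)
    (h : ∀ u : ℕ, u < y.card → ∑ i ∈ y, f i ^ u = 0) : False := by
  classical
  set c := y.card with hc
  have hc0 : 0 < c := Finset.card_pos.mpr hy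
  let eqv : Fin c ≃ {x // x ∈ y} := y.equivFin.symm
  set v : Fin c → K := fun q => f (eqv q) with hv
  have hvinj : Function.Injective v := by
    intro a b hab
    have := hf (eqv a).2 (eqv b).2 hab
    exact eqv.injective (Subtype.ext this)
  set A : Matrix (Fin c) (Fin c) K := (Matrix.vandermonde v).transpose with hA
  have hdet : A.det ≠ 0 := by
    rw [hA, Matrix.det_transpose]
    exact (Matrix.det_vandermonde_ne_zero_iff).mpr hvinj
  have hmul : A.mulVec (fun _ => (1:K)) = 0 := by
    funext p
    have hsum : ∑ q : Fin c, v q ^ (p : ℕ) = ∑ i ∈ y, f i ^ (p : ℕ) := by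
      rw [← Finset.sum_attach y (fun i => f i ^ (p : ℕ))]
      exact Equiv.sum_comp eqv (fun i : {x // x ∈ y} => f (i : ι) ^ (p : ℕ))
    calc A.mulVec (fun _ => (1:K)) p = ∑ q, v q ^ (p : ℕ) := by
          simp [Matrix.mulVec, A, Matrix.vandermonde, dotProduct]
      _ = 0 := by rw [hsum]; exact h p p.2
  have : (fun _ => (1:K)) = (0 : Fin c → K) := by
    have h1 : A⁻¹.mulVec (A.mulVec (fun _ => (1:K))) = (fun _ => (1:K)) := by
      rw [Matrix.mulVec_mulVec, Matrix.nonsing_inv_mul A (Ne.isUnit hdet), Matrix.one_mulVec]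
    rw [hmul, Matrix.mulVec_zero] at h1
    exact h1.symm
  have := congrFun this ⟨0, hc0⟩
  simpa using this

lemma count_roots_le {F : Type*} [Field F] [Fintype F] [DecidableEq F] [Module (ZMod 2) F]
    {J : Type*} [Fintype J] [DecidableEq J]
    {b : J → ZMod 2} (hb : b ≠ 0) {e : J → ℕ} (he : Function.Injective e) {k : ℕ}
    (hek : ∀ j, e j ≤ k) :
    (Finset.univ.filter (fun x : F => ∑ j, (b j) • x ^ (e j) = 0)).card ≤ k := by
  classical
  have h2 : ∀ a : ZMod 2, a = 0 ∨ a = 1 := by decide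
  set T : Finset J := Finset.univ.filter (fun j => b j = 1) with hT
  set Q : Polynomial F := ∑ j ∈ T, Polynomial.X ^ (e j) with hQ
  have heval : ∀ x : F, Q.eval x = ∑ j, (b j) • x ^ (e j) := by
    intro x
    rw [hQ, Polynomial.eval_finset_sum]
    simp only [Polynomial.eval_pow, Polynomial.eval_X]
    rw [← Finset.sum_filter_add_sum_filter_not Finset.univ (fun j => b j = 1)
      (fun j => (b j) • x ^ (e j))]
    have h1 : ∑ j ∈ T, (b j) • x ^ (e j) = ∑ j ∈ T, x ^ (e j) := by
      refine Finset.sum_congr rfl fun j hj => ?_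
      rw [(Finset.mem_filter.mp hj).2, one_smul]
    have h0 : ∑ j ∈ Finset.univ.filter (fun j => ¬ b j = 1), (b j) • x ^ (e j) = 0 := by
      refine Finset.sum_eq_zero fun j hj => ?_
      have := (Finset.mem_filter.mp hj).2
      have hbj : b j = 0 := (h2 (b j)).resolve_right this
      rw [hbj, zero_smul]
    rw [h1, h0, add_zero]
  obtain ⟨j0, hj0⟩ : ∃ j0, b j0 = 1 := by
    by_contra h; push_neg at h
    exact hb (funext fun j => (h2 (b j)).resolve_right (h j))
  have hj0T : j0 ∈ T := Finset.mem_filter.mpr ⟨Finset.mem_univ _, hj0⟩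
  have hQne : Q ≠ 0 := by
    intro h0
    have : Q.coeff (e j0) = 1 := by
      rw [hQ, Polynomial.finset_sum_coeff]
      rw [Finset.sum_eq_single j0]
      · simp [Polynomial.coeff_X_pow]
      · intro j hj hne
        rw [Polynomial.coeff_X_pow, if_neg (fun h : e j0 = e j => hne (he h).symm)]
      · intro h; exact absurd hj0T h
    rw [h0] at this
    simp at this
  have hdeg : Q.natDegree ≤ k :=
    Polynomial.natDegree_sum_le_of_forall_le _ _ fun j _ => by
      simpa [Polynomial.natDegree_X_pow] using hek j
  have hsub : Finset.univ.filter (fun x : F => ∑ j, (b j) • x ^ (e j) = 0) ⊆ Q.roots.toFinset := by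
    intro x hx
    rw [Multiset.mem_toFinset, Polynomial.mem_roots']
    refine ⟨hQne, ?_⟩ <;> rw [Polynomial.IsRoot, heval x] <;> exact (Finset.mem_filter.mp hx).2
  calc (Finset.univ.filter (fun x : F => ∑ j, (b j) • x ^ (e j) = 0)).card
      ≤ Q.roots.toFinset.card := Finset.card_le_card hsub
    _ ≤ Multiset.card Q.roots := Q.roots.toFinset_card_le
    _ ≤ Q.natDegree := Polynomial.card_roots' Q
    _ ≤ k := hdeg
open Finset

lemma loglog_ge (n : ℕ) (hn : 1 ≤ n) : -(1/2 : ℝ) ≤ Real.log (Real.log n) := by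
  rcases eq_or_lt_of_le hn with h | h
  · simp [← h]
  · have hn2 : (2:ℕ) ≤ n := h
    have hlog2 : (0.6931471803 : ℝ) < Real.log 2 := Real.log_two_gt_d9
    have hexp : Real.exp (-(1/2)) ≤ 2/3 := by
      rw [Real.exp_neg, inv_le_comm₀ (Real.exp_pos _) (by norm_num)]
      have := Real.add_one_le_exp (1/2 : ℝ)
      nlinarith
    have hln : Real.exp (-(1/2)) ≤ Real.log n := by
      have h2n : Real.log 2 ≤ Real.log n := by
        apply Real.log_le_log (by norm_num)
        exact_mod_cast hn2
      nlinarith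
    calc -(1/2 : ℝ) = Real.log (Real.exp (-(1/2))) := (Real.log_exp _).symm
      _ ≤ Real.log (Real.log n) := Real.log_le_log (Real.exp_pos _) hln

lemma pow_clog_le (N : ℕ) (hN : 1 ≤ N) : 2 ^ Nat.clog 2 N ≤ 2 * N := by
  rcases eq_or_lt_of_le hN with h | h
  · simp [← h]
  · have h1 : 0 < Nat.clog 2 N := Nat.clog_pos one_lt_two h
    have h2 : 2 ^ (Nat.clog 2 N - 1) < N := Nat.pow_pred_clog_lt_self one_lt_two h
    have : 2 ^ Nat.clog 2 N = 2 * 2 ^ (Nat.clog 2 N - 1) := by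
      rw [← pow_succ']
      congr 1
      omega
    omega

lemma t_bound (n : ℕ) (hn : 1 ≤ n) (t : ℕ) (ht : t = Nat.clog 2 n + 1) :
    ((t:ℝ))^2 ≤ 32 * (2:ℝ) ^ (3 * Real.log (Real.log n)) := by
  have hL : -(1/2 : ℝ) ≤ Real.log (Real.log n) := loglog_ge n hn
  rcases lt_or_ge n 3 with h3 | h3
  · -- n ∈ {1, 2}: t ≤ 2
    have htle : t ≤ 2 := by
      interval_cases n <;> simp [ht] <;> norm_num [Nat.clog]
    have h1 : ((t:ℝ))^2 ≤ 4 := by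
      have : (t:ℝ) ≤ 2 := by exact_mod_cast htle
      nlinarith [Nat.cast_nonneg (α := ℝ) t]
    have h2 : (2:ℝ) ^ (-(2:ℝ)) ≤ (2:ℝ) ^ (3 * Real.log (Real.log n)) := by
      apply Real.rpow_le_rpow_of_exponent_le one_le_two
      nlinarith
    have h3 : (2:ℝ) ^ (-(2:ℝ)) = 1/4 := by
      rw [Real.rpow_neg (by norm_num), show ((2:ℝ)^(2:ℝ)) = 4 by
        rw [show (2:ℝ) = ((2:ℕ):ℝ) by norm_num, Real.rpow_natCast]; norm_num]
      norm_num
    have hX : (1/4:ℝ) ≤ (2:ℝ) ^ (3 * Real.log (Real.log n)) := h3 ▸ h2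
    nlinarith [hX, h1]
  · -- n ≥ 3: Real.log n ≥ 1
    have hn0 : (0:ℝ) < n := by positivity
    have hln1 : (1:ℝ) ≤ Real.log n := by
      have : Real.exp 1 ≤ (n:ℝ) := by
        have := Real.exp_one_lt_d9
        have : Real.exp 1 < 3 := by linarith
        have h3' : (3:ℝ) ≤ n := by exact_mod_cast h3
        linarith
      calc (1:ℝ) = Real.log (Real.exp 1) := (Real.log_exp 1).symm
        _ ≤ Real.log n := Real.log_le_log (Real.exp_pos 1) this
    have hlnpos : (0:ℝ) < Real.log n := by linarith
    -- 2^t ≤ 4n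
    have hpow : (2:ℕ) ^ t ≤ 4 * n := by
      rw [ht, pow_succ]
      have := pow_clog_le n hn
      omega
    have hpowR : (2:ℝ) ^ (t:ℕ) ≤ 4 * n := by exact_mod_cast hpow
    -- t ≤ 4 ln n
    have hlog2 : (0.6931471803 : ℝ) < Real.log 2 := Real.log_two_gt_d9
    have htln : (t:ℝ) ≤ 4 * Real.log n := by
      have h1 : (t:ℝ) * Real.log 2 ≤ Real.log (4 * n) := by
        rw [← Real.log_pow]
        apply Real.log_le_log (by positivity) hpowR
      rw [Real.log_mul (by norm_num) (ne_of_gt hn0)] at h1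
      have h4 : Real.log 4 = 2 * Real.log 2 := by
        rw [show (4:ℝ) = 2^2 by norm_num, Real.log_pow]; push_cast; ring
      rw [h4] at h1
      nlinarith [Nat.cast_nonneg (α := ℝ) t]
    have ht2 : ((t:ℝ))^2 ≤ 16 * (Real.log n)^2 := by nlinarith [Nat.cast_nonneg (α := ℝ) t]
    -- (ln n)^2 ≤ (ln n)^(3 ln 2) = 2^(3 L)
    have hr1 : (Real.log n)^2 = (Real.log n) ^ ((2:ℕ):ℝ) := by
      rw [Real.rpow_natCast]
    have hr2 : (Real.log n) ^ ((2:ℕ):ℝ) ≤ (Real.log n) ^ (3 * Real.log 2) := by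
      apply Real.rpow_le_rpow_of_exponent_le hln1
      push_cast
      nlinarith
    have hr3 : (Real.log n) ^ (3 * Real.log 2) = (2:ℝ) ^ (3 * Real.log (Real.log n)) := by
      rw [Real.rpow_def_of_pos hlnpos, Real.rpow_def_of_pos (by norm_num : (0:ℝ) < 2)]
      congr 1
      ring
    calc ((t:ℝ))^2 ≤ 16 * (Real.log n)^2 := ht2
      _ ≤ 16 * (2:ℝ) ^ (3 * Real.log (Real.log n)) := by
          rw [hr1] at *; nlinarith [hr2, hr3.le, hr3.ge]
      _ ≤ 32 * (2:ℝ) ^ (3 * Real.log (Real.log n)) := by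
          have : (0:ℝ) < (2:ℝ) ^ (3 * Real.log (Real.log n)) := Real.rpow_pos_of_pos (by norm_num) _
          nlinarith

set_option maxHeartbeats 1000000 in
lemma size_bound (n ℓ : ℕ) (hn : 1 ≤ n) (hℓ : 1 ≤ ℓ) (ε : ℝ) (hε0 : 0 < ε) (hε1 : ε < 1)
    (t m : ℕ) (ht : t = Nat.clog 2 n + 1) (hm : m = Nat.clog 2 (ℓ * t * ⌈1/ε⌉₊) + 1) :
    ((2:ℝ) ^ (2*m : ℕ)) ≤ 2 ^ ((32:ℝ) * (Real.log (Real.log n) + ℓ + Real.log (1/ε))) := by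
  set L := Real.log (Real.log n) with hL
  set E := Real.log (1/ε) with hE
  have hEpos : 0 < E := Real.log_pos (by rw [lt_div_iff₀ hε0]; linarith)
  have hLlb : -(1/2 : ℝ) ≤ L := loglog_ge n hn
  set N : ℕ := ℓ * t * ⌈1/ε⌉₊ with hN
  have ht1 : 1 ≤ t := by omega
  have hceil1 : 1 ≤ ⌈1/ε⌉₊ := Nat.one_le_iff_ne_zero.mpr (by
    have : (0:ℝ) < 1/ε := by positivity
    positivity)
  have hN1 : 1 ≤ N := by
    have := Nat.one_le_iff_ne_zero.mp hceil1
    exact Nat.one_le_iff_ne_zero.mpr (by positivity)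
  have h2m : (2:ℕ) ^ m ≤ 4 * N := by
    rw [hm, pow_succ]
    have := pow_clog_le N hN1
    omega
  have h2mR : (2:ℝ) ^ (m:ℕ) ≤ 4 * N := by exact_mod_cast h2m
  have hpos2m : (0:ℝ) ≤ (2:ℝ) ^ (m:ℕ) := by positivity
  have hMR : (2:ℝ) ^ (2*m : ℕ) ≤ ((4:ℝ) * N)^2 := by
    rw [mul_comm 2 m, pow_mul]
    exact pow_le_pow_left₀ hpos2m h2mR 2
  have hceilR : (⌈1/ε⌉₊ : ℝ) ≤ 2/ε := by
    have h1 : (⌈1/ε⌉₊ : ℝ) < 1/ε + 1 := Nat.ceil_lt_add_one (by positivity)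
    have h2 : 1/ε + 1 ≤ 2/ε := by
      rw [div_add' _ _ _ (ne_of_gt hε0), div_le_div_iff₀ hε0 hε0]
      nlinarith
    linarith
  have hNR : (N:ℝ) ≤ 2 * ℓ * t / ε := by
    have h0 : (N:ℝ) = (ℓ:ℝ) * t * (⌈1/ε⌉₊:ℝ) := by rw [hN]; push_cast; ring
    have h1 : (ℓ:ℝ) * t * (⌈1/ε⌉₊:ℝ) ≤ (ℓ:ℝ) * t * (2/ε) :=
      mul_le_mul_of_nonneg_left hceilR (by positivity)
    rw [h0]
    calc (ℓ:ℝ) * t * (⌈1/ε⌉₊:ℝ) ≤ (ℓ:ℝ) * t * (2/ε) := h1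
      _ = 2 * ℓ * t / ε := by ring
  have hM2 : (2:ℝ) ^ (2*m : ℕ) ≤ 64 * ((ℓ:ℝ)^2 * ((t:ℝ)^2 * (1/ε)^2)) := by
    have hNR0 : (0:ℝ) ≤ (N:ℝ) := by positivity
    have : ((4:ℝ) * N)^2 ≤ (4 * (2 * ℓ * t / ε))^2 := by
      apply pow_le_pow_left₀ (by positivity)
      nlinarith
    calc (2:ℝ) ^ (2*m : ℕ) ≤ ((4:ℝ) * N)^2 := hMR
      _ ≤ (4 * (2 * ℓ * t / ε))^2 := this
      _ = 64 * ((ℓ:ℝ)^2 * ((t:ℝ)^2 * (1/ε)^2)) := by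
          field_simp
          ring
  -- bound each factor by rpow
  have hfl : (ℓ:ℝ)^2 ≤ (2:ℝ) ^ ((2*ℓ : ℕ):ℝ) := by
    rw [Real.rpow_natCast, mul_comm 2 ℓ, pow_mul]
    apply pow_le_pow_left₀ (by positivity)
    exact_mod_cast (Nat.lt_two_pow_self (n := ℓ)).le
  have hft : (t:ℝ)^2 ≤ 32 * (2:ℝ) ^ (3 * L) := t_bound n hn t ht
  have hfe : (1/ε)^2 ≤ (2:ℝ) ^ (3 * E) := by
    have h1 : (1/ε) = Real.exp E := by rw [hE, Real.exp_log (by positivity)]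
    have hlog2 : (0.6931471803 : ℝ) < Real.log 2 := Real.log_two_gt_d9
    have h2 : (Real.exp E)^2 = Real.exp (2 * E) := by
      rw [← Real.exp_nat_mul]; norm_num
    rw [h1, h2, Real.rpow_def_of_pos (by norm_num : (0:ℝ) < 2)]
    apply Real.exp_le_exp.mpr
    nlinarith
  -- combine
  have hrl : (2:ℝ) ^ ((2*ℓ : ℕ):ℝ) = (2:ℝ) ^ ((2*ℓ : ℝ)) := by norm_num
  have key : 64 * ((ℓ:ℝ)^2 * ((t:ℝ)^2 * (1/ε)^2))
      ≤ (2:ℝ) ^ ((11:ℝ) + 2*ℓ + 3*L + 3*E) := by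
    have h64 : (64:ℝ) = (2:ℝ) ^ ((6:ℝ)) := by
      rw [show ((6:ℝ)) = ((6:ℕ):ℝ) by norm_num, Real.rpow_natCast]; norm_num
    have h32 : (32:ℝ) = (2:ℝ) ^ ((5:ℝ)) := by
      rw [show ((5:ℝ)) = ((5:ℕ):ℝ) by norm_num, Real.rpow_natCast]; norm_num
    have step : 64 * ((ℓ:ℝ)^2 * ((t:ℝ)^2 * (1/ε)^2))
        ≤ 64 * ((2:ℝ) ^ ((2*ℓ:ℝ)) * ((32 * (2:ℝ) ^ (3*L)) * (2:ℝ) ^ (3*E))) := by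
      have p1 : (0:ℝ) ≤ (ℓ:ℝ)^2 := by positivity
      have p2 : (0:ℝ) ≤ (t:ℝ)^2 := by positivity
      have p3 : (0:ℝ) ≤ (1/ε)^2 := by positivity
      have q1 : (0:ℝ) ≤ (2:ℝ) ^ ((2*ℓ:ℝ)) := by positivity
      have q2 : (0:ℝ) ≤ 32 * (2:ℝ) ^ (3*L) := by positivity
      have q3 : (0:ℝ) ≤ (2:ℝ) ^ (3*E) := by positivity
      have hfl' := hrl ▸ hfl
      gcongr
      all_goals first | exact hfl' | exact hft | exact hfe | positivity
    have eqq : 64 * ((2:ℝ) ^ ((2*ℓ:ℝ)) * ((32 * (2:ℝ) ^ (3*L)) * (2:ℝ) ^ (3*E)))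
        = (2:ℝ) ^ ((11:ℝ) + 2*ℓ + 3*L + 3*E) := by
      rw [h64, h32]
      rw [show ((11:ℝ) + 2*ℓ + 3*L + 3*E) = (6:ℝ) + ((2*ℓ:ℝ) + ((5:ℝ) + 3*L + 3*E)) by ring]
      rw [Real.rpow_add (by norm_num : (0:ℝ) < 2), Real.rpow_add (by norm_num : (0:ℝ) < 2),
        Real.rpow_add (by norm_num : (0:ℝ) < 2), Real.rpow_add (by norm_num : (0:ℝ) < 2)]
      try ring
    linarith [step, eqq.le, eqq.ge]
  have final : (2:ℝ) ^ ((11:ℝ) + 2*ℓ + 3*L + 3*E) ≤ (2:ℝ) ^ ((32:ℝ) * (L + ℓ + E)) := by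
    apply Real.rpow_le_rpow_of_exponent_le one_le_two
    have hℓR : (1:ℝ) ≤ ℓ := by exact_mod_cast hℓ
    nlinarith
  calc (2:ℝ) ^ (2*m : ℕ) ≤ 64 * ((ℓ:ℝ)^2 * ((t:ℝ)^2 * (1/ε)^2)) := hM2
    _ ≤ (2:ℝ) ^ ((11:ℝ) + 2*ℓ + 3*L + 3*E) := key
    _ ≤ (2:ℝ) ^ ((32:ℝ) * (L + ℓ + E)) := final

lemma chi_map_sum {m : ℕ} {A : Type*} [AddCommGroup A] [Module (ZMod 2) A]
    (φ : A →ₗ[ZMod 2] (Fin m → ZMod 2)) (w : Fin m → ZMod 2) {ι : Type*} (y : Finset ι)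
    (f : ι → A) : chi (φ (∑ i ∈ y, f i)) w = ∏ i ∈ y, chi (φ (f i)) w := by
  classical
  induction y using Finset.cons_induction with
  | empty => simp [chi_zero]
  | cons i s hi ih => rw [Finset.sum_cons, Finset.prod_cons, map_add, chi_add, ih]

set_option maxHeartbeats 1000000 in
theorem stmt14' : ∀ (n ℓ : ℕ), 1 ≤ n → 1 ≤ ℓ →
    ∀ ε : ℝ, 0 < ε → ε < 1 →
    ∃ (M : ℕ) (z : Fin M → Fin n → ℝ), 0 < M ∧
      (M : ℝ) ≤ 2 ^ ((32:ℝ) * (Real.log (Real.log n) + ℓ + Real.log (1 / ε))) ∧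
      (∀ s i, z s i = 1 ∨ z s i = -1) ∧
      ∀ y : Finset (Fin n), y.Nonempty → y.card ≤ ℓ →
        |(∑ s, ∏ i ∈ y, z s i) / M| ≤ ε := by
  intro n ℓ hn hℓ ε hε0 hε1
  classical
  set t : ℕ := Nat.clog 2 n + 1 with htdef
  have ht0 : t ≠ 0 := by omega
  set K := GaloisField 2 t with hK
  letI : Fintype K := Fintype.ofFinite K
  have cardK : Fintype.card K = 2 ^ t := by
    rw [← Nat.card_eq_fintype_card]; exact GaloisField.card 2 t ht0
  -- embedding of Fin n into K
  have hcard : Fintype.card (Fin n) ≤ Fintype.card K := by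
    rw [Fintype.card_fin, cardK]
    calc n ≤ 2 ^ Nat.clog 2 n := Nat.le_pow_clog one_lt_two n
      _ ≤ 2 ^ t := Nat.pow_le_pow_right (by norm_num) (by omega)
  obtain ⟨α⟩ := Function.Embedding.nonempty_of_card_le hcard
  -- linear equiv to (Fin t → ZMod 2)
  have hfinrankK : Module.finrank (ZMod 2) K = t := GaloisField.finrank 2 ht0
  let basisK : Module.Basis (Fin t) (ZMod 2) K := Module.finBasisOfFinrankEq _ _ hfinrankK
  let binT : K ≃ₗ[ZMod 2] (Fin t → ZMod 2) := basisK.equivFun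
  let a : Fin n → (Fin ℓ × Fin t) → ZMod 2 := fun i j => binT (α i ^ (j.1 : ℕ)) j.2
  -- the small field
  set m : ℕ := Nat.clog 2 (ℓ * t * ⌈1/ε⌉₊) + 1 with hmdef
  have hm0 : m ≠ 0 := by omega
  set F := GaloisField 2 m with hF
  letI : Fintype F := Fintype.ofFinite F
  have cardF : Fintype.card F = 2 ^ m := by
    rw [← Nat.card_eq_fintype_card]; exact GaloisField.card 2 m hm0
  have hfinrankF : Module.finrank (ZMod 2) F = m := GaloisField.finrank 2 hm0
  let basisF : Module.Basis (Fin m) (ZMod 2) F := Module.finBasisOfFinrankEq _ _ hfinrankF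
  let binM : F ≃ₗ[ZMod 2] (Fin m → ZMod 2) := basisF.equivFun
  -- exponents
  let e : (Fin ℓ × Fin t) → ℕ := fun j => (finProdFinEquiv j : Fin (ℓ * t)).val
  have heinj : Function.Injective e := fun j j' h =>
    finProdFinEquiv.injective (Fin.val_injective h)
  have heb : ∀ j, e j ≤ ℓ * t := fun j => le_of_lt (finProdFinEquiv j).2
  -- the sample strings
  let g : Fin n → F → F := fun i x => ∑ j : Fin ℓ × Fin t, (a i j) • x ^ (e j)
  let W := Fin m → ZMod 2
  let Z : (F × W) → Fin n → ℝ := fun s i => chi (binM (g i s.1)) s.2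
  set M : ℕ := 2 ^ (2 * m) with hMdef
  have cardFW : Fintype.card (F × W) = M := by
    have hW : Fintype.card W = 2 ^ m := by simp [W, ZMod]; exact Fintype.card_fun.trans (by simp)
    rw [Fintype.card_prod, cardF, hW, hMdef]
    ring
  let eqv : Fin M ≃ (F × W) := (Fintype.equivFinOfCardEq cardFW).symm
  refine ⟨M, fun s => Z (eqv s), by positivity, ?_, ?_, ?_⟩
  · -- size bound
    have := size_bound n ℓ hn hℓ ε hε0 hε1 t m htdef hmdef
    calc (M:ℝ) = (2:ℝ) ^ (2*m : ℕ) := by push_cast [hMdef]; norm_num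
      _ ≤ _ := this
  · intro s i
    exact chi_one_or_neg _ _
  · -- bias
    intro y hy hyℓ
    set b : (Fin ℓ × Fin t) → ZMod 2 := fun j => ∑ i ∈ y, a i j with hb
    have hbne : b ≠ 0 := by
      intro hb0
      refine vandermonde_power_sums hy (fun i => (α i : K)) (α.injective.injOn) ?_
      intro u hu
      have hu' : u < ℓ := lt_of_lt_of_le hu hyℓ
      have hzero : ∀ v : Fin t, ∑ i ∈ y, binT (α i ^ u) v = 0 := by
        intro v
        have := congrFun hb0 (⟨u, hu'⟩, v)
        simpa [b, a] using this
      have : binT (∑ i ∈ y, α i ^ u) = 0 := by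
        funext v
        rw [map_sum, Finset.sum_apply]
        exact hzero v
      have := (LinearEquiv.map_eq_zero_iff binT).mp this
      exact this
    -- rewrite the sum
    have hsum_eq : ∑ s : Fin M, ∏ i ∈ y, Z (eqv s) i = ∑ p : F × W, ∏ i ∈ y, Z p i :=
      Equiv.sum_comp eqv (fun p => ∏ i ∈ y, Z p i)
    have hprod : ∀ (x : F) (w : W), ∏ i ∈ y, Z (x, w) i
        = chi (binM (∑ j : Fin ℓ × Fin t, (b j) • x ^ (e j))) w := by
      intro x w
      have h1 : ∏ i ∈ y, Z (x, w) i = chi (binM (∑ i ∈ y, g i x)) w := by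
        rw [show (binM : F ≃ₗ[ZMod 2] (Fin m → ZMod 2)) (∑ i ∈ y, g i x)
          = (binM : F →ₗ[ZMod 2] (Fin m → ZMod 2)) (∑ i ∈ y, g i x) from rfl,
          chi_map_sum]
        rfl
      rw [h1]
      congr 2
      rw [hb]
      calc ∑ i ∈ y, g i x = ∑ i ∈ y, ∑ j : Fin ℓ × Fin t, (a i j) • x ^ (e j) := rfl
        _ = ∑ j : Fin ℓ × Fin t, ∑ i ∈ y, (a i j) • x ^ (e j) := Finset.sum_comm
        _ = ∑ j : Fin ℓ × Fin t, (∑ i ∈ y, a i j) • x ^ (e j) := by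
            refine Finset.sum_congr rfl fun j _ => ?_
            rw [Finset.sum_smul]
    set R : ℕ := (Finset.univ.filter
      (fun x : F => ∑ j : Fin ℓ × Fin t, (b j) • x ^ (e j) = 0)).card with hR
    have hRle : R ≤ ℓ * t := count_roots_le hbne heinj heb
    have hsum_val : ∑ p : F × W, ∏ i ∈ y, Z p i = (R : ℝ) * (2:ℝ)^m := by
      rw [Fintype.sum_prod_type]
      have : ∀ x : F, ∑ w : W, ∏ i ∈ y, Z (x, w) i
          = if (∑ j : Fin ℓ × Fin t, (b j) • x ^ (e j)) = 0 then (2:ℝ)^m else 0 := by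
        intro x
        have := sum_chi (m := m) (binM (∑ j : Fin ℓ × Fin t, (b j) • x ^ (e j)))
        rw [show ∑ w : W, ∏ i ∈ y, Z (x, w) i
          = ∑ w : Fin m → ZMod 2, chi (binM (∑ j : Fin ℓ × Fin t, (b j) • x ^ (e j))) w from
            Finset.sum_congr rfl fun w _ => hprod x w, this]
        by_cases h : (∑ j : Fin ℓ × Fin t, (b j) • x ^ (e j)) = 0
        · rw [if_pos h, if_pos (by rw [h, map_zero])]
        · rw [if_neg h, if_neg (fun hc => h ((LinearEquiv.map_eq_zero_iff binM).mp hc))]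
      rw [Finset.sum_congr rfl fun x _ => this x, ← Finset.sum_filter, Finset.sum_const,
        nsmul_eq_mul, hR]
    -- final bound
    have h2m_ge : (ℓ * t * ⌈1/ε⌉₊ : ℕ) ≤ 2 ^ m := by
      calc (ℓ * t * ⌈1/ε⌉₊ : ℕ) ≤ 2 ^ Nat.clog 2 (ℓ * t * ⌈1/ε⌉₊) :=
            Nat.le_pow_clog one_lt_two _
        _ ≤ 2 ^ m := Nat.pow_le_pow_right (by norm_num) (by omega)
    have hkε : (ℓ * t : ℝ) ≤ ε * 2 ^ m := by
      have hceil : (1:ℝ)/ε ≤ (⌈1/ε⌉₊ : ℝ) := Nat.le_ceil _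
      have h1 : (ℓ:ℝ) * (t:ℝ) * (⌈1/ε⌉₊ : ℝ) ≤ (2:ℝ) ^ m := by exact_mod_cast h2m_ge
      have hlt : (0:ℝ) ≤ (ℓ:ℝ) * t := by positivity
      have h2 : (ℓ:ℝ) * t * (1/ε) ≤ (ℓ:ℝ) * t * (⌈1/ε⌉₊ : ℝ) :=
        mul_le_mul_of_nonneg_left hceil hlt
      have h3 : (ℓ:ℝ) * t * (1/ε) ≤ (2:ℝ) ^ m := le_trans h2 h1
      rw [mul_one_div, div_le_iff₀ hε0] at h3
      calc (ℓ * t : ℝ) = (ℓ:ℝ) * t := by push_cast; ring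
        _ ≤ (2:ℝ)^m * ε := h3
        _ = ε * 2 ^ m := by ring
    have hab : |(∑ s : Fin M, ∏ i ∈ y, Z (eqv s) i) / M| ≤ ε := by
      rw [hsum_eq, hsum_val]
      have hMcast : (M:ℝ) = (2:ℝ)^m * (2:ℝ)^m := by
        rw [hMdef, two_mul, pow_add]; push_cast; ring
      rw [hMcast]
      have hpos : (0:ℝ) < (2:ℝ)^m := by positivity
      have hRpos : (0:ℝ) ≤ (R:ℝ) := Nat.cast_nonneg R
      rw [abs_of_nonneg (div_nonneg (by nlinarith) (by nlinarith))]
      rw [div_le_iff₀ (by nlinarith)]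
      have hRR : (R:ℝ) ≤ (ℓ * t : ℝ) := by exact_mod_cast hRle
      calc (R:ℝ) * (2:ℝ)^m ≤ (ε * 2^m) * (2:ℝ)^m := by nlinarith
        _ = ε * ((2:ℝ)^m * 2^m) := by ring
    exact hab

/-- Existence of small-support `ε`-biased `ℓ`-wise independent distributions (AGHP/NN):
for every `n ≥ 1`, `ℓ ≥ 1`, `ε ∈ (0,1)` there is a distribution on `{−1,1}ⁿ` (given as the
uniform distribution over a sequence of `M` strings) of support size
`M ≤ 2^{O(log log n + ℓ + log(1/ε))}` that is `ε`-biased `ℓ`-wise independent. -/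
theorem stmt14 : ∃ C : ℝ, 0 < C ∧ ∀ (n ℓ : ℕ), 1 ≤ n → 1 ≤ ℓ →
    ∀ ε : ℝ, 0 < ε → ε < 1 →
    ∃ (M : ℕ) (z : Fin M → Fin n → ℝ), 0 < M ∧
      (M : ℝ) ≤ 2 ^ (C * (Real.log (Real.log n) + ℓ + Real.log (1 / ε))) ∧
      (∀ s i, z s i = 1 ∨ z s i = -1) ∧
      ∀ y : Finset (Fin n), y.Nonempty → y.card ≤ ℓ →
        |(∑ s, ∏ i ∈ y, z s i) / M| ≤ ε := by
  exact ⟨32, by norm_num, stmt14'⟩
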